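/- For every β > 1 there exists a constant c ∈ (0, 1/2), depending only on β, with the following property. Whenever e₁, e₂, f₁, f₂ ∈ ℝ² are pairwise distinct, both {e₁,e₂} and {f₁,f₂} are edges of the β-skeleton of {e₁,e₂,f₁,f₂}, and a > 0 satisfies dist(e₁,e₂) ≥ a and dist(f₁,f₂) ≥ a, then for all m ∈ [a/2, dist(e₁,e₂) − a/2] and m' ∈ [a/2, dist(f₁,f₂) − a/2], the closed balls of radius c·a centered at h_m(e₁,e₂) and at h_{m'}(f₁,f₂) are disjoint, where h_t(x,y) := x + t·(y−x)/dist(x,y) is the point on the segment [x,y] at distance t from x. -/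

import Mathlib

set_option maxHeartbeats 3000000

open Metric Set RealInnerProductSpace

def Cbeta (β : ℝ) (x y : EuclideanSpace ℝ (Fin 2)) : Set (EuclideanSpace ℝ (Fin 2)) :=
  {z | ∃ M : EuclideanSpace ℝ (Fin 2),
    dist M x = β * dist x y / 2 ∧ dist M y = β * dist x y / 2 ∧ dist z M ≤ β * dist x y / 2}

def IsSkelEdge (β : ℝ) (φ : Set (EuclideanSpace ℝ (Fin 2)))
    (x y : EuclideanSpace ℝ (Fin 2)) : Prop :=
  x ∈ φ ∧ y ∈ φ ∧ x ≠ y ∧ Cbeta β x y ∩ φ ⊆ {x, y}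

/-- The point on the segment `[x, y]` at distance `t` from `x`. -/
noncomputable def hpt (x y : EuclideanSpace ℝ (Fin 2)) (t : ℝ) : EuclideanSpace ℝ (Fin 2) :=
  x + (t / dist x y) • (y - x)

abbrev E2 := EuclideanSpace ℝ (Fin 2)

noncomputable def detv (v w : E2) : ℝ := v 0 * w 1 - v 1 * w 0

lemma inner_eq (v w : E2) : ⟪v, w⟫ = v 0 * w 0 + v 1 * w 1 := by
  simp [PiLp.inner_apply, Fin.sum_univ_two, RCLike.inner_apply, conj_trivial]; ring

lemma norm_sq_eq (v : E2) : ‖v‖^2 = v 0 ^2 + v 1 ^2 := by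
  rw [← real_inner_self_eq_norm_sq, inner_eq]; ring

lemma lagrange (v w : E2) : ⟪v, w⟫^2 + (detv v w)^2 = ‖v‖^2 * ‖w‖^2 := by
  rw [inner_eq, norm_sq_eq, norm_sq_eq, detv]; ring

lemma eq_of_sq_eq {a b : ℝ} (ha : 0 ≤ a) (hb : 0 ≤ b) (h : a^2 = b^2) : a = b := by nlinarith

lemma le_of_sq_le {a b : ℝ} (ha : 0 ≤ a) (hb : 0 ≤ b) (h : a^2 ≤ b^2) : a ≤ b := by nlinarith

lemma detv_abs_le (v w : E2) : |detv v w| ≤ ‖v‖ * ‖w‖ := by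
  apply le_of_sq_le (abs_nonneg _) (by positivity)
  rw [sq_abs, mul_pow]
  nlinarith [lagrange v w, sq_nonneg (⟪v,w⟫)]

lemma apply_smul (r : ℝ) (v : E2) (i : Fin 2) : (r • v) i = r * v i := rfl
lemma apply_add (a b : E2) (i : Fin 2) : (a + b) i = a i + b i := rfl
lemma apply_sub (a b : E2) (i : Fin 2) : (a - b) i = a i - b i := rfl
lemma apply_neg (a : E2) (i : Fin 2) : (-a) i = -(a i) := rfl

lemma detv_sub_left (a b w : E2) : detv (a - b) w = detv a w - detv b w := by
  simp only [detv, apply_sub]; ring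

lemma detv_add_left (a b w : E2) : detv (a + b) w = detv a w + detv b w := by
  simp only [detv, apply_add]; ring

lemma detv_add_right (w a b : E2) : detv w (a + b) = detv w a + detv w b := by
  simp only [detv, apply_add]; ring

lemma detv_self (v : E2) : detv v v = 0 := by simp only [detv]; ring

lemma detv_vertex (x y z : E2) : detv (y - x) (z - x) = detv (x - z) (y - z) := by
  simp only [detv, apply_sub]; ring

noncomputable def Jv (v : E2) : E2 := (WithLp.equiv 2 (Fin 2 → ℝ)).symm ![-(v 1), v 0]

lemma Jv_inner (v w : E2) : ⟪Jv v, w⟫ = detv v w := by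
  simp [inner_eq, Jv, detv]; ring

lemma Jv_norm_sq (v : E2) : ‖Jv v‖^2 = ‖v‖^2 := by
  rw [norm_sq_eq, norm_sq_eq]; simp [Jv]; ring

lemma Jv_inner_self (v : E2) : ⟪v, Jv v⟫ = 0 := by
  simp [inner_eq, Jv]; ring

lemma mem_Cbeta {β : ℝ} (hβ : 1 < β) (x y z : E2)
    (h : ⟪z - x, z - y⟫ ≤ Real.sqrt (β^2 - 1) * |detv (y - x) (z - x)|) :
    z ∈ Cbeta β x y := by
  set c1 := Real.sqrt (β^2 - 1) with hc1
  have hc1sq : c1^2 = β^2 - 1 := Real.sq_sqrt (by nlinarith)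
  set w : E2 := y - x with hw
  set sg : ℝ := if 0 ≤ detv w (z - x) then 1 else -1 with hsg
  have hsg2 : sg^2 = 1 := by rw [hsg]; split <;> norm_num
  have hsgd : sg * detv w (z - x) = |detv w (z - x)| := by
    rw [hsg]; split
    · rw [abs_of_nonneg ‹_›]; ring
    · rw [abs_of_neg (by linarith [lt_of_not_ge ‹_›])]; ring
  have hd : ‖w‖ = dist x y := by rw [hw, dist_eq_norm, norm_sub_rev]
  have hβ0 : (0:ℝ) ≤ β * dist x y / 2 := by positivity
  set e : ℝ := c1 * sg / 2 with he
  refine ⟨x + (2⁻¹ : ℝ) • w + e • Jv w, ?_, ?_, ?_⟩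
  · rw [dist_eq_norm]
    apply eq_of_sq_eq (norm_nonneg _) hβ0
    have : x + (2⁻¹ : ℝ) • w + e • Jv w - x = (2⁻¹ : ℝ) • w + e • Jv w := by abel
    rw [this, ← real_inner_self_eq_norm_sq]
    simp only [inner_add_left, inner_add_right, real_inner_smul_left, real_inner_smul_right]
    have h0 : ⟪w, Jv w⟫ = 0 := Jv_inner_self w
    have h1 : ⟪Jv w, w⟫ = 0 := by rw [real_inner_comm]; exact h0
    have h2 : ⟪Jv w, Jv w⟫ = ‖w‖^2 := by
      rw [real_inner_self_eq_norm_sq]; exact Jv_norm_sq w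
    have h3 : ⟪w, w⟫ = ‖w‖^2 := real_inner_self_eq_norm_sq w
    rw [h0, h1, h2, h3, hd]
    have : e^2 = (β^2-1)/4 := by rw [he]; field_simp; nlinarith [hsg2, hc1sq]
    nlinarith [this]
  · rw [dist_eq_norm]
    apply eq_of_sq_eq (norm_nonneg _) hβ0
    have : x + (2⁻¹ : ℝ) • w + e • Jv w - y = -((2⁻¹ : ℝ) • w) + e • Jv w := by
      rw [hw]; match_scalars <;> ring
    rw [this, ← real_inner_self_eq_norm_sq]
    simp only [inner_add_left, inner_add_right, inner_neg_left, inner_neg_right,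
      real_inner_smul_left, real_inner_smul_right]
    have h0 : ⟪w, Jv w⟫ = 0 := Jv_inner_self w
    have h1 : ⟪Jv w, w⟫ = 0 := by rw [real_inner_comm]; exact h0
    have h2 : ⟪Jv w, Jv w⟫ = ‖w‖^2 := by
      rw [real_inner_self_eq_norm_sq]; exact Jv_norm_sq w
    have h3 : ⟪w, w⟫ = ‖w‖^2 := real_inner_self_eq_norm_sq w
    rw [h0, h1, h2, h3, hd]
    have : e^2 = (β^2-1)/4 := by rw [he]; field_simp; nlinarith [hsg2, hc1sq]
    nlinarith [this]
  · rw [dist_eq_norm]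
    apply le_of_sq_le (norm_nonneg _) hβ0
    obtain ⟨zx, hzx⟩ : ∃ v : E2, v = z - x := ⟨_, rfl⟩
    have : z - (x + (2⁻¹ : ℝ) • w + e • Jv w) = zx - (2⁻¹ : ℝ) • w - e • Jv w := by
      rw [hzx]; abel
    rw [this, ← real_inner_self_eq_norm_sq]
    simp only [inner_sub_left, inner_sub_right, real_inner_smul_left, real_inner_smul_right]
    have h0 : ⟪w, Jv w⟫ = 0 := Jv_inner_self w
    have h1 : ⟪Jv w, w⟫ = 0 := by rw [real_inner_comm]; exact h0
    have h2 : ⟪Jv w, Jv w⟫ = ‖w‖^2 := by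
      rw [real_inner_self_eq_norm_sq]; exact Jv_norm_sq w
    have h3 : ⟪w, w⟫ = ‖w‖^2 := real_inner_self_eq_norm_sq w
    have h4 : ⟪Jv w, zx⟫ = detv w (z - x) := by rw [hzx]; exact Jv_inner w (z - x)
    have h5 : ⟪zx, Jv w⟫ = detv w (z - x) := by rw [real_inner_comm]; exact h4
    have h6 : ⟪z - x, z - y⟫ = ⟪zx, zx⟫ - ⟪zx, w⟫ := by
      rw [hzx, hw, ← inner_sub_right]; congr 1; abel
    have he2 : e^2 = (β^2-1)/4 := by rw [he]; field_simp; nlinarith [hsg2, hc1sq]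
    have key : ⟪zx, zx⟫ - ⟪zx, w⟫ ≤ c1 * |detv w (z - x)| := by
      rw [← h6]; exact h
    have key : ⟪zx, zx⟫ - ⟪zx, w⟫ ≤ c1 * |detv w (z - x)| := key
    have h7 : ⟪w, zx⟫ = ⟪zx, w⟫ := real_inner_comm _ _
    have h8 : e * detv w (z - x) = c1 * |detv w (z - x)| / 2 := by
      rw [he, ← hsgd]; ring
    rw [h0, h1, h2, h3, h4, h5, hd]
    nlinarith [he2, key, h7, h8]

/-- scalar crossing lemma -/
lemma cross_scalar {s t s' t' g : ℝ} (hs : 0 < s) (ht : 0 < t) (hs' : 0 < s') (ht' : 0 < t') :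
    s^2 - s'*t' + s*(t'-s')*g ≤ 0 ∨ t^2 - s'*t' - t*(t'-s')*g ≤ 0 ∨
    s'^2 - s*t + s'*(t-s)*g ≤ 0 ∨ t'^2 - s*t - t'*(t-s)*g ≤ 0 := by
  by_contra h
  push_neg at h
  obtain ⟨h1, h2, h3, h4⟩ := h
  nlinarith [mul_pos ht h1, mul_pos hs h2, mul_pos ht' h3, mul_pos hs' h4]

/-- perturbation lemma -/
lemma perturb {c1 ρ τ : ℝ} {w1 w2 δ W1 W2 : E2} (hc1 : 0 < c1) (hρ : 0 < ρ)
    (h1 : ρ ≤ ‖w1‖) (h2 : ρ ≤ ‖w2‖) (hQ : ⟪w1, w2⟫ ≤ 0) (hδ : ‖δ‖ ≤ τ)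
    (hτ : τ ≤ ρ * min 1 c1 / 16)
    (hW1 : W1 = w1 + δ) (hW2 : W2 = w2 + δ)
    (hsk : c1 * |detv W1 W2| < ⟪W1, W2⟫) : False := by
  have hδ0 : (0:ℝ) ≤ τ := le_trans (norm_nonneg _) hδ
  have hτ1 : τ ≤ ρ / 16 := le_trans hτ (by nlinarith [min_le_left (1:ℝ) c1, hρ.le])
  have hτ2 : τ ≤ ρ * c1 / 16 := le_trans hτ (by nlinarith [min_le_right (1:ℝ) c1, hρ.le])
  set r1 := ‖w1‖
  set r2 := ‖w2‖
  -- inner product expansion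
  have hN : ⟪W1, W2⟫ = ⟪w1, w2⟫ + ⟪w1, δ⟫ + ⟪δ, w2⟫ + ‖δ‖^2 := by
    rw [hW1, hW2]
    simp only [inner_add_left, inner_add_right, real_inner_self_eq_norm_sq]
    ring
  have hNb : ⟪W1, W2⟫ ≤ τ * (r1 + r2) + τ^2 + ⟪w1, w2⟫ := by
    have a1 : ⟪w1, δ⟫ ≤ r1 * τ := by
      calc ⟪w1, δ⟫ ≤ ‖w1‖ * ‖δ‖ := real_inner_le_norm _ _
      _ ≤ r1 * τ := by apply mul_le_mul_of_nonneg_left hδ (norm_nonneg _)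
    have a2 : ⟪δ, w2⟫ ≤ τ * r2 := by
      calc ⟪δ, w2⟫ ≤ ‖δ‖ * ‖w2‖ := real_inner_le_norm _ _
      _ ≤ τ * r2 := by apply mul_le_mul_of_nonneg_right hδ (norm_nonneg _)
    have a3 : ‖δ‖^2 ≤ τ^2 := by nlinarith [norm_nonneg δ]
    rw [hN]; nlinarith
  -- determinant expansion
  have hD : detv W1 W2 = detv w1 w2 + (detv w1 δ + detv δ w2) := by
    rw [hW1, hW2, detv_add_left, detv_add_right, detv_add_right, detv_self]; ring
  have hDb : |detv w1 w2| - τ * (r1 + r2) ≤ |detv W1 W2| := by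
    have b1 : |detv w1 δ| ≤ r1 * τ :=
      le_trans (detv_abs_le _ _) (mul_le_mul_of_nonneg_left hδ (norm_nonneg _))
    have b2 : |detv δ w2| ≤ τ * r2 :=
      le_trans (detv_abs_le _ _) (mul_le_mul_of_nonneg_right hδ (norm_nonneg _))
    have := abs_add_le (detv w1 δ) (detv δ w2)
    have h3 : |detv w1 w2| ≤ |detv W1 W2| + |detv w1 δ + detv δ w2| := by
      have e : detv w1 w2 = detv W1 W2 + -(detv w1 δ + detv δ w2) := by rw [hD]; ring
      rw [e]
      exact (abs_add_le _ _).trans (by rw [abs_neg])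
    nlinarith [abs_nonneg (detv w1 δ + detv δ w2)]
  have hr1 : (0:ℝ) < r1 := lt_of_lt_of_le hρ h1
  have hr2 : (0:ℝ) < r2 := lt_of_lt_of_le hρ h2
  have hlag : ⟪w1, w2⟫^2 + (detv w1 w2)^2 = r1^2 * r2^2 := lagrange w1 w2
  rcases le_or_gt (r1 * r2 / 2) (-⟪w1, w2⟫) with hca | hcb
  · -- inner product very negative
    have : ⟪W1, W2⟫ ≤ 0 := by nlinarith
    have : (0:ℝ) ≤ c1 * |detv W1 W2| := by positivity
    linarith
  · -- determinant big
    have hDbig : r1 * r2 / 2 ≤ |detv w1 w2| := by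
      apply le_of_sq_le (by positivity) (abs_nonneg _)
      rw [sq_abs]; nlinarith
    have : c1 * |detv W1 W2| ≥ c1 * (r1 * r2 / 2 - τ * (r1 + r2)) := by
      have := le_trans (by linarith : r1 * r2 / 2 - τ * (r1+r2) ≤ |detv w1 w2| - τ * (r1+r2)) hDb
      nlinarith
    nlinarith [hsk, hNb, this, mul_pos hr1 hr2, sq_nonneg (r1 - r2),
      mul_le_mul_of_nonneg_right hτ1 (le_of_lt hr1),
      mul_le_mul_of_nonneg_right hτ1 (le_of_lt hr2),
      mul_le_mul_of_nonneg_right hτ2 (le_of_lt hr1),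
      mul_le_mul_of_nonneg_right hτ2 (le_of_lt hr2),
      mul_le_mul_of_nonneg_left h1 hδ0, mul_le_mul_of_nonneg_left h2 hδ0]

/-- scalar part of the close-endpoints argument -/
lemma close_arith {c1 a d d' ε η ρ P P' G G' σ : ℝ}
    (hc1 : 0 < c1) (ha : 0 < a) (had : a ≤ d) (had' : a ≤ d')
    (hρ0 : 0 < ρ) (hρ : ρ ≤ η * a) (hη0 : 0 < η)
    (hεη : ε ≤ η) (hε : 0 ≤ ε) (hσ : σ = ε + η)
    (hη64 : η * (64 * c1 + 64) = c1)
    (hG0 : 0 ≤ G) (hG'0 : 0 ≤ G')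
    (hi : d * P + c1 * (d * G) < ρ^2)
    (hii : c1 * (d' * G') < ρ^2 + d' * P')
    (hPP' : P' ≤ P + ρ * (4 * σ))
    (hGG' : G ≤ G' + ρ * (4 * σ))
    (hρle : ρ ≤ |P| + G) : False := by
  have hσ0 : 0 < σ := by rw [hσ]; linarith
  have hσ2η : σ ≤ 2 * η := by rw [hσ]; linarith
  have hI : a * P + c1 * (a * G) < ρ^2 := by
    rcases le_or_gt 0 (P + c1 * G) with hcase | hcase
    · nlinarith [hi, mul_le_mul_of_nonneg_right had hcase]
    · nlinarith [mul_neg_of_pos_of_neg ha hcase, sq_nonneg ρ]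
  have hII : c1 * (a * G') - a * P' < ρ^2 := by
    rcases le_or_gt 0 (c1 * G' - P') with hcase | hcase
    · nlinarith [hii, mul_le_mul_of_nonneg_right had' hcase]
    · nlinarith [mul_neg_of_pos_of_neg ha hcase, sq_nonneg ρ]
  have haP : a * P < ρ^2 := by
    nlinarith [hI, mul_nonneg (mul_nonneg hc1.le ha.le) hG0]
  have hnaP : -(a * P) < ρ^2 + 4 * σ * ρ * a := by
    have t1 : a * P' ≤ a * P + a * (ρ * (4 * σ)) := by
      nlinarith [mul_le_mul_of_nonneg_left hPP' ha.le]
    have t2 : -(a * P') < ρ^2 := by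
      nlinarith [hII, mul_nonneg (mul_nonneg hc1.le ha.le) hG'0]
    nlinarith
  have habs : a * |P| < ρ^2 + 4 * σ * ρ * a := by
    have e : a * |P| = |a * P| := by rw [abs_mul, abs_of_pos ha]
    rw [e]
    apply abs_lt.mpr
    constructor
    · nlinarith
    · nlinarith [mul_nonneg (mul_nonneg (mul_nonneg (by norm_num : (0:ℝ) ≤ 4) hσ0.le) hρ0.le) ha.le]
  have hGb : c1 * (a * G) < ρ^2 + 2 * σ * ρ * a * (1 + c1) := by
    have t1 : c1 * (a * G) ≤ c1 * (a * G') + c1 * a * (ρ * (4 * σ)) := by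
      nlinarith [mul_le_mul_of_nonneg_left hGG' (mul_nonneg hc1.le ha.le)]
    have t2 : a * P' ≤ a * P + a * (ρ * (4 * σ)) := by
      nlinarith [mul_le_mul_of_nonneg_left hPP' ha.le]
    nlinarith [hI, hII]
  have hfin : a * c1 * ρ < c1 * (ρ^2 + 4 * σ * ρ * a) + (ρ^2 + 2 * σ * ρ * a * (1 + c1)) := by
    have t1 : a * c1 * ρ ≤ a * c1 * (|P| + G) :=
      mul_le_mul_of_nonneg_left hρle (mul_nonneg ha.le hc1.le)
    have t2 : c1 * (a * |P|) < c1 * (ρ^2 + 4 * σ * ρ * a) :=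
      mul_lt_mul_of_pos_left habs hc1
    nlinarith [hGb]
  have hηsmall : η * (13 * c1 + 5) < c1 := by nlinarith [hη0]
  have hT : 0 < a * ρ := mul_pos ha hρ0
  have step : a * c1 * ρ < (13 * c1 + 5) * η * (a * ρ) := by
    have k1 : c1 * ρ^2 ≤ c1 * ((η*a) * ρ) := by
      nlinarith [mul_le_mul_of_nonneg_right hρ hρ0.le, hc1.le]
    have k2 : ρ^2 ≤ (η*a) * ρ := by
      nlinarith [mul_le_mul_of_nonneg_right hρ hρ0.le]
    have k3 : σ * (ρ * a) ≤ 2*η*(ρ*a) :=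
      mul_le_mul_of_nonneg_right hσ2η (mul_nonneg hρ0.le ha.le)
    nlinarith [hfin, mul_nonneg hc1.le (mul_nonneg hρ0.le ha.le), k1, k2, k3,
      mul_le_mul_of_nonneg_left k3 hc1.le]
  nlinarith [mul_lt_mul_of_pos_right hηsmall hT, step]

/-- close endpoints lemma -/
lemma close {c1 a d d' m m' ε η : ℝ} {x1 x2 y1 y2 p q u v : E2}
    (hc1 : 0 < c1) (ha : 0 < a)
    (hdd : d = dist x1 x2) (hd'd : d' = dist y1 y2)
    (had : a ≤ d) (had' : a ≤ d')
    (hu : u = d⁻¹ • (x2 - x1)) (hv : v = d'⁻¹ • (y2 - y1))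
    (hp : p = x1 + m • u) (hq : q = y1 + m' • v)
    (hm : a/2 ≤ m) (hm' : a/2 ≤ m')
    (hpq : ‖p - q‖ ≤ ε * a) (hε : 0 ≤ ε)
    (hne : y1 ≠ x1) (hρa : ‖y1 - x1‖ ≤ η * a)
    (hsk1 : c1 * |detv (x1 - y1) (x2 - y1)| < ⟪x1 - y1, x2 - y1⟫)
    (hsk2 : c1 * |detv (y1 - x1) (y2 - x1)| < ⟪y1 - x1, y2 - x1⟫)
    (hη : η = 1 / (8 * (8 * (1 + 1/c1))))
    (hεb : ε ≤ 1 / (8 * (8 * (1 + 1/c1)))) : False := by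
  have hd0 : (0:ℝ) < d := lt_of_lt_of_le ha had
  have hd'0 : (0:ℝ) < d' := lt_of_lt_of_le ha had'
  obtain ⟨w, hw⟩ : ∃ w : E2, w = y1 - x1 := ⟨_, rfl⟩
  obtain ⟨ρ, hρdef⟩ : ∃ ρ : ℝ, ρ = ‖w‖ := ⟨_, rfl⟩
  have hρ0 : 0 < ρ := by
    rw [hρdef, hw, norm_pos_iff]; exact sub_ne_zero_of_ne hne
  have hρ : ρ ≤ η * a := by rw [hρdef, hw]; exact hρa
  have hdu : d • u = x2 - x1 := by
    rw [hu, smul_smul, mul_inv_cancel₀ hd0.ne', one_smul]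
  have hdv : d' • v = y2 - y1 := by
    rw [hv, smul_smul, mul_inv_cancel₀ hd'0.ne', one_smul]
  have hun : ‖u‖ = 1 := by
    rw [hu, norm_smul, ← dist_eq_norm', ← hdd]
    rw [norm_inv, Real.norm_eq_abs, abs_of_pos hd0]
    field_simp
  have hvn : ‖v‖ = 1 := by
    rw [hv, norm_smul, ← dist_eq_norm', ← hd'd]
    rw [norm_inv, Real.norm_eq_abs, abs_of_pos hd'0]
    field_simp
  obtain ⟨P, hP⟩ : ∃ P : ℝ, P = ⟪w, u⟫ := ⟨_, rfl⟩
  obtain ⟨P', hP'⟩ : ∃ P' : ℝ, P' = ⟪w, v⟫ := ⟨_, rfl⟩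
  obtain ⟨G, hG⟩ : ∃ G : ℝ, G = |detv u w| := ⟨_, rfl⟩
  obtain ⟨G', hG'⟩ : ∃ G' : ℝ, G' = |detv v w| := ⟨_, rfl⟩
  -- (i)
  have hi : d * P + c1 * (d * G) < ρ^2 := by
    have e1 : x1 - y1 = -w := by rw [hw]; abel
    have e2 : x2 - y1 = d • u - w := by rw [hdu, hw]; abel
    have eN : ⟪x1 - y1, x2 - y1⟫ = ρ^2 - d * P := by
      rw [e1, e2, inner_neg_left, inner_sub_right, real_inner_smul_right,
        real_inner_self_eq_norm_sq, ← hρdef, ← hP]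
      ring
    have eD : |detv (x1 - y1) (x2 - y1)| = d * G := by
      rw [e1, e2]
      have h1 : detv (-w) (d • u - w) = d * detv u w := by
        simp only [detv, apply_neg, apply_sub, apply_smul]; ring
      rw [h1, abs_mul, abs_of_pos hd0, hG]
    rw [eN, eD] at hsk1; linarith
  -- (ii)
  have hii : c1 * (d' * G') < ρ^2 + d' * P' := by
    have e2 : y2 - x1 = d' • v + w := by rw [hdv, hw]; abel
    have eN : ⟪y1 - x1, y2 - x1⟫ = d' * P' + ρ^2 := by
      rw [← hw, e2, inner_add_right, real_inner_smul_right,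
        real_inner_self_eq_norm_sq, ← hρdef, ← hP']
    have eD : |detv (y1 - x1) (y2 - x1)| = d' * G' := by
      rw [← hw, e2]
      have h1 : detv w (d' • v + w) = -(d' * detv v w) := by
        simp only [detv, apply_add, apply_smul]; ring
      rw [h1, abs_neg, abs_mul, abs_of_pos hd'0, hG']
    rw [eN, eD] at hsk2; linarith
  -- direction closeness
  obtain ⟨σ, hσ⟩ : ∃ σ : ℝ, σ = ε + η := ⟨_, rfl⟩
  have hη0 : (0:ℝ) < η := by rw [hη]; positivity
  have hσ0 : 0 < σ := by rw [hσ]; linarith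
  have hmuv : ‖m • u - m' • v‖ ≤ σ * a := by
    have e : m • u - m' • v = (p - q) + w := by rw [hp, hq, hw]; abel
    rw [e]
    calc ‖(p - q) + w‖ ≤ ‖p - q‖ + ‖w‖ := norm_add_le _ _
    _ ≤ ε * a + η * a := add_le_add hpq (by rw [hw]; exact hρa)
    _ = σ * a := by rw [hσ]; ring
  have hmm' : |m - m'| ≤ σ * a := by
    have h0 := abs_norm_sub_norm_le (m • u) (m' • v)
    rw [norm_smul, norm_smul, hun, hvn, Real.norm_eq_abs, Real.norm_eq_abs,
      abs_of_nonneg (by linarith : (0:ℝ) ≤ m), abs_of_nonneg (by linarith : (0:ℝ) ≤ m')] at h0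
    simp only [mul_one] at h0
    exact le_trans h0 hmuv
  have huv : ‖u - v‖ ≤ 4 * σ := by
    have e : m • (u - v) = (m • u - m' • v) + (m' - m) • v := by
      rw [smul_sub, sub_smul]; abel
    have h0 : m * ‖u - v‖ ≤ 2 * (σ * a) := by
      have h1 : ‖m • (u - v)‖ = m * ‖u - v‖ := by
        rw [norm_smul, Real.norm_eq_abs, abs_of_nonneg (by linarith : (0:ℝ) ≤ m)]
      rw [← h1, e]
      calc ‖(m • u - m' • v) + (m' - m) • v‖ ≤ ‖m • u - m' • v‖ + ‖(m' - m) • v‖ :=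
        norm_add_le _ _
      _ ≤ σ * a + |m' - m| := by
          rw [norm_smul, hvn, mul_one, Real.norm_eq_abs]
          exact add_le_add hmuv le_rfl
      _ ≤ 2 * (σ * a) := by rw [abs_sub_comm]; linarith
    nlinarith [norm_nonneg (u - v), hm, ha]
  -- transfer between u and v
  have hPP' : P' ≤ P + ρ * (4 * σ) := by
    have h0 : P - P' = ⟪w, u - v⟫ := by rw [hP, hP', ← inner_sub_right]
    have h1 : -(ρ * ‖u - v‖) ≤ ⟪w, u - v⟫ := by
      have := abs_real_inner_le_norm w (u - v)
      rw [← hρdef] at this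
      cases' abs_le.mp this with hl hr; linarith
    nlinarith [norm_nonneg (u - v), hρ0.le]
  have hGG' : G ≤ G' + ρ * (4 * σ) := by
    have h1 : |detv u w| ≤ |detv v w| + |detv (u - v) w| := by
      have e : detv u w = detv v w + detv (u - v) w := by rw [detv_sub_left]; ring
      rw [e]; exact abs_add_le _ _
    have h2 : |detv (u - v) w| ≤ ‖u - v‖ * ρ := by
      rw [hρdef]; exact detv_abs_le _ _
    rw [hG, hG']
    nlinarith [norm_nonneg (u - v), hρ0.le]
  -- pass to scalar lemma
  have hη0 : (0:ℝ) < η := by rw [hη]; positivity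
  have hG0 : (0:ℝ) ≤ G := by rw [hG]; exact abs_nonneg _
  have hρle : ρ ≤ |P| + G := by
    have hl : P^2 + (detv u w)^2 = ρ^2 := by
      have hlem := lagrange u w
      rw [hun, ← hρdef] at hlem
      have hcomm : ⟪u, w⟫ = P := by rw [hP]; exact real_inner_comm w u
      rw [hcomm] at hlem
      nlinarith [hlem]
    apply le_of_sq_le hρ0.le (add_nonneg (abs_nonneg P) hG0)
    have hGsq : G^2 = (detv u w)^2 := by rw [hG, sq_abs]
    nlinarith [abs_nonneg P, sq_abs P, mul_nonneg (abs_nonneg P) hG0]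
  have hden : (0:ℝ) < 64 * c1 + 64 := by nlinarith
  have hη64 : η * (64 * c1 + 64) = c1 := by
    have hpos : (0:ℝ) < 8 * (8 * (1 + 1/c1)) := by
      have h1 : 0 < 1/c1 := one_div_pos.mpr hc1
      nlinarith
    have hη' : η = c1 / (64 * c1 + 64) := by
      rw [hη, div_eq_div_iff hpos.ne' hden.ne']
      field_simp
      ring
    rw [hη', div_mul_cancel₀ _ hden.ne']
  have hεη : ε ≤ η := by rw [hη]; exact hεb
  exact close_arith hc1 ha had had' hρ0 hρ hη0 hεη hε hσ hη64
    hG0 (by rw [hG']; exact abs_nonneg _) hi hii hPP' hGG' hρle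

-- ### new glue lemmas

lemma Cbeta_subset (β : ℝ) (x y : E2) : Cbeta β x y ⊆ Cbeta β y x := by
  rintro z ⟨M, h1, h2, h3⟩
  exact ⟨M, by rw [dist_comm y x]; exact h2, by rw [dist_comm y x]; exact h1,
    by rw [dist_comm y x]; exact h3⟩

lemma Cbeta_comm (β : ℝ) (x y : E2) : Cbeta β x y = Cbeta β y x :=
  Set.Subset.antisymm (Cbeta_subset β x y) (Cbeta_subset β y x)

lemma unit_norm {x y : E2} (h : x ≠ y) : ‖(dist x y)⁻¹ • (y - x)‖ = 1 := by
  have hd : 0 < dist x y := dist_pos.mpr h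
  rw [norm_smul, ← dist_eq_norm', norm_inv, Real.norm_eq_abs, abs_of_pos hd]
  field_simp

lemma smul_dist {x y : E2} (h : x ≠ y) : (dist x y) • ((dist x y)⁻¹ • (y - x)) = y - x := by
  have hd : dist x y ≠ 0 := dist_ne_zero.mpr h
  rw [smul_smul, mul_inv_cancel₀ hd, one_smul]

lemma nonmem_ineq {β : ℝ} (hβ : 1 < β) {x y z : E2} (h : z ∉ Cbeta β x y) :
    Real.sqrt (β^2-1) * |detv (x - z) (y - z)| < ⟪x - z, y - z⟫ := by
  by_contra hc
  push_neg at hc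
  apply h
  apply mem_Cbeta hβ
  have e1 : ⟪z - x, z - y⟫ = ⟪x - z, y - z⟫ := by
    rw [show (x - z : E2) = -(z - x) by abel, show (y - z : E2) = -(z - y) by abel,
      inner_neg_neg]
  rw [e1, detv_vertex]
  exact hc

lemma hpt_eq (x y : E2) (t : ℝ) : hpt x y t = x + t • ((dist x y)⁻¹ • (y - x)) := by
  rw [hpt, div_eq_mul_inv, ← smul_smul]

lemma hpt_rev (x y : E2) (t : ℝ) (hxy : x ≠ y) :
    hpt x y t = y + (dist x y - t) • ((dist y x)⁻¹ • (x - y)) := by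
  rw [hpt, dist_comm y x]
  have hd : dist x y ≠ 0 := dist_ne_zero.mpr hxy
  match_scalars <;> field_simp <;> ring

lemma inner_comb (a b cc dd : ℝ) (u v : E2) (hu : ‖u‖ = 1) (hv : ‖v‖ = 1) :
    ⟪a•u + b•v, cc•u + dd•v⟫ = a*cc + b*dd + (a*dd + b*cc) * ⟪u,v⟫ := by
  have h1 : ⟪u,u⟫ = 1 := by rw [real_inner_self_eq_norm_sq, hu]; norm_num
  have h2 : ⟪v,v⟫ = 1 := by rw [real_inner_self_eq_norm_sq, hv]; norm_num
  have h3 : ⟪v,u⟫ = ⟪u,v⟫ := real_inner_comm u v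
  simp only [inner_add_left, inner_add_right, real_inner_smul_left, real_inner_smul_right,
    h1, h2, h3]
  ring

theorem stmt1 (β : ℝ) (hβ : 1 < β) :
    ∃ c : ℝ, 0 < c ∧ c < 1 / 2 ∧
      ∀ e₁ e₂ f₁ f₂ : EuclideanSpace ℝ (Fin 2),
        e₁ ≠ e₂ → e₁ ≠ f₁ → e₁ ≠ f₂ → e₂ ≠ f₁ → e₂ ≠ f₂ → f₁ ≠ f₂ →
        IsSkelEdge β {e₁, e₂, f₁, f₂} e₁ e₂ →
        IsSkelEdge β {e₁, e₂, f₁, f₂} f₁ f₂ →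
        ∀ a : ℝ, 0 < a → a ≤ dist e₁ e₂ → a ≤ dist f₁ f₂ →
        ∀ m m' : ℝ, m ∈ Set.Icc (a / 2) (dist e₁ e₂ - a / 2) →
          m' ∈ Set.Icc (a / 2) (dist f₁ f₂ - a / 2) →
          Disjoint (closedBall (hpt e₁ e₂ m) (c * a)) (closedBall (hpt f₁ f₂ m') (c * a)) := by
  obtain ⟨c1, hc1def⟩ : ∃ c1 : ℝ, c1 = Real.sqrt (β^2 - 1) := ⟨_, rfl⟩
  have hc1 : 0 < c1 := by rw [hc1def]; exact Real.sqrt_pos.mpr (by nlinarith)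
  obtain ⟨η, hηdef⟩ : ∃ η : ℝ, η = 1 / (8 * (8 * (1 + 1/c1))) := ⟨_, rfl⟩
  have hinv : 0 < 1/c1 := one_div_pos.mpr hc1
  have hη0 : 0 < η := by rw [hηdef]; apply one_div_pos.mpr; nlinarith
  have hηsmall : η ≤ 1/64 := by
    rw [hηdef]
    rw [div_le_div_iff₀ (by nlinarith) (by norm_num)]
    nlinarith
  have hminpos : 0 < min 1 c1 := lt_min one_pos hc1
  have hmin1 : min 1 c1 ≤ 1 := min_le_left _ _
  obtain ⟨c, hcdef⟩ : ∃ c : ℝ, c = min (η/2) (η * min 1 c1 / 32) / 2 := ⟨_, rfl⟩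
  have hc0 : 0 < c := by
    rw [hcdef]
    apply div_pos (lt_min (by linarith) (by positivity)) (by norm_num)
  have hcle1 : c ≤ η / 4 := by
    rw [hcdef]
    have := min_le_left (η/2) (η * min 1 c1 / 32)
    linarith
  have hcle2 : 2 * c ≤ η * min 1 c1 / 32 := by
    rw [hcdef]
    have := min_le_right (η/2) (η * min 1 c1 / 32)
    linarith
  refine ⟨c, hc0, by linarith, ?_⟩
  intro e1 e2 f1 f2 h12 h1f1 h1f2 h2f1 h2f2 hff he hf a ha haE haF m m' hm hm'
  obtain ⟨hmlo, hmhi⟩ := hm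
  obtain ⟨hm'lo, hm'hi⟩ := hm'
  by_contra hdisj
  rw [Set.not_disjoint_iff] at hdisj
  obtain ⟨z, hz1, hz2⟩ := hdisj
  rw [mem_closedBall] at hz1 hz2
  have hpq : dist (hpt e1 e2 m) (hpt f1 f2 m') ≤ 2*c*a := by
    calc dist (hpt e1 e2 m) (hpt f1 f2 m')
        ≤ dist (hpt e1 e2 m) z + dist z (hpt f1 f2 m') := dist_triangle _ _ _
    _ ≤ c*a + c*a := add_le_add (by rw [dist_comm]; exact hz1) hz2
    _ = 2*c*a := by ring
  -- non-membership facts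
  have hnf1 : f1 ∉ Cbeta β e1 e2 := by
    intro hcb
    have h' := he.2.2.2 ⟨hcb, by simp⟩
    simp only [Set.mem_insert_iff, Set.mem_singleton_iff] at h'
    rcases h' with h | h
    · exact h1f1 h.symm
    · exact h2f1 h.symm
  have hnf2 : f2 ∉ Cbeta β e1 e2 := by
    intro hcb
    have h' := he.2.2.2 ⟨hcb, by simp⟩
    simp only [Set.mem_insert_iff, Set.mem_singleton_iff] at h'
    rcases h' with h | h
    · exact h1f2 h.symm
    · exact h2f2 h.symm
  have hne1 : e1 ∉ Cbeta β f1 f2 := by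
    intro hcb
    have h' := hf.2.2.2 ⟨hcb, by simp⟩
    simp only [Set.mem_insert_iff, Set.mem_singleton_iff] at h'
    rcases h' with h | h
    · exact h1f1 h
    · exact h1f2 h
  have hne2 : e2 ∉ Cbeta β f1 f2 := by
    intro hcb
    have h' := hf.2.2.2 ⟨hcb, by simp⟩
    simp only [Set.mem_insert_iff, Set.mem_singleton_iff] at h'
    rcases h' with h | h
    · exact h2f1 h
    · exact h2f2 h
  -- the eight skeleton inequalities
  have hE1 : c1 * |detv (f1 - e1) (f2 - e1)| < ⟪f1 - e1, f2 - e1⟫ := by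
    rw [hc1def]; exact nonmem_ineq hβ hne1
  have hE2 : c1 * |detv (f1 - e2) (f2 - e2)| < ⟪f1 - e2, f2 - e2⟫ := by
    rw [hc1def]; exact nonmem_ineq hβ hne2
  have hE1' : c1 * |detv (f2 - e1) (f1 - e1)| < ⟪f2 - e1, f1 - e1⟫ := by
    rw [hc1def]; exact nonmem_ineq hβ (by rw [Cbeta_comm]; exact hne1)
  have hE2' : c1 * |detv (f2 - e2) (f1 - e2)| < ⟪f2 - e2, f1 - e2⟫ := by
    rw [hc1def]; exact nonmem_ineq hβ (by rw [Cbeta_comm]; exact hne2)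
  have hF1 : c1 * |detv (e1 - f1) (e2 - f1)| < ⟪e1 - f1, e2 - f1⟫ := by
    rw [hc1def]; exact nonmem_ineq hβ hnf1
  have hF2 : c1 * |detv (e1 - f2) (e2 - f2)| < ⟪e1 - f2, e2 - f2⟫ := by
    rw [hc1def]; exact nonmem_ineq hβ hnf2
  have hF1' : c1 * |detv (e2 - f1) (e1 - f1)| < ⟪e2 - f1, e1 - f1⟫ := by
    rw [hc1def]; exact nonmem_ineq hβ (by rw [Cbeta_comm]; exact hnf1)
  have hF2' : c1 * |detv (e2 - f2) (e1 - f2)| < ⟪e2 - f2, e1 - f2⟫ := by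
    rw [hc1def]; exact nonmem_ineq hβ (by rw [Cbeta_comm]; exact hnf2)
  -- geometry setup
  obtain ⟨u, hu⟩ : ∃ u : E2, u = (dist e1 e2)⁻¹ • (e2 - e1) := ⟨_, rfl⟩
  obtain ⟨v, hv⟩ : ∃ v : E2, v = (dist f1 f2)⁻¹ • (f2 - f1) := ⟨_, rfl⟩
  have hp : hpt e1 e2 m = e1 + m • u := by rw [hpt_eq, hu]
  have hq : hpt f1 f2 m' = f1 + m' • v := by rw [hpt_eq, hv]
  have hε1 : (0:ℝ) ≤ 2*c := by linarith
  have hpq' : ‖hpt e1 e2 m - hpt f1 f2 m'‖ ≤ (2*c) * a := by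
    rw [← dist_eq_norm]; linarith [hpq]
  have hηε : 2*c ≤ 1 / (8*(8*(1+1/c1))) := by
    rw [← hηdef]
    nlinarith [hcle2, hminpos, hmin1, hη0]
  by_cases hclose : dist e1 f1 ≤ η*a ∨ dist e1 f2 ≤ η*a ∨ dist e2 f1 ≤ η*a ∨ dist e2 f2 ≤ η*a
  · rcases hclose with h | h | h | h
    · exact close hc1 ha rfl rfl haE haF hu hv hp hq hmlo hm'lo hpq' hε1
        (Ne.symm h1f1) (by rw [← dist_eq_norm']; exact h) hF1 hE1 hηdef hηε
    · -- e1, f2 close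
      obtain ⟨v2, hv2⟩ : ∃ v2 : E2, v2 = (dist f2 f1)⁻¹ • (f1 - f2) := ⟨_, rfl⟩
      have hq2 : hpt f1 f2 m' = f2 + (dist f1 f2 - m') • v2 := by
        rw [hpt_rev f1 f2 m' hff, hv2]
      exact close hc1 ha rfl rfl haE (by rw [dist_comm]; exact haF) hu hv2 hp hq2
        hmlo (by linarith) hpq' hε1
        (Ne.symm h1f2) (by rw [← dist_eq_norm']; exact h) hF2 hE1' hηdef hηε
    · -- e2, f1 close
      obtain ⟨u2, hu2⟩ : ∃ u2 : E2, u2 = (dist e2 e1)⁻¹ • (e1 - e2) := ⟨_, rfl⟩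
      have hp2 : hpt e1 e2 m = e2 + (dist e1 e2 - m) • u2 := by
        rw [hpt_rev e1 e2 m h12, hu2]
      exact close hc1 ha rfl rfl (by rw [dist_comm]; exact haE) haF hu2 hv hp2 hq
        (by linarith) hm'lo hpq' hε1
        (Ne.symm h2f1) (by rw [← dist_eq_norm']; exact h) hF1' hE2 hηdef hηε
    · -- e2, f2 close
      obtain ⟨u2, hu2⟩ : ∃ u2 : E2, u2 = (dist e2 e1)⁻¹ • (e1 - e2) := ⟨_, rfl⟩
      obtain ⟨v2, hv2⟩ : ∃ v2 : E2, v2 = (dist f2 f1)⁻¹ • (f1 - f2) := ⟨_, rfl⟩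
      have hp2 : hpt e1 e2 m = e2 + (dist e1 e2 - m) • u2 := by
        rw [hpt_rev e1 e2 m h12, hu2]
      have hq2 : hpt f1 f2 m' = f2 + (dist f1 f2 - m') • v2 := by
        rw [hpt_rev f1 f2 m' hff, hv2]
      exact close hc1 ha rfl rfl (by rw [dist_comm]; exact haE) (by rw [dist_comm]; exact haF)
        hu2 hv2 hp2 hq2 (by linarith) (by linarith) hpq' hε1
        (Ne.symm h2f2) (by rw [← dist_eq_norm']; exact h) hF2' hE2' hηdef hηε
  · -- far case: crossing + perturbation
    push_neg at hclose
    obtain ⟨hc11, hc12, hc21, hc22⟩ := hclose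
    obtain ⟨δ, hδ⟩ : ∃ δ : E2, δ = hpt e1 e2 m - hpt f1 f2 m' := ⟨_, rfl⟩
    have hδn : ‖δ‖ ≤ 2*c*a := by rw [hδ, ← dist_eq_norm]; linarith [hpq]
    have hδn' : ‖-δ‖ ≤ 2*c*a := by rwa [norm_neg]
    have hun : ‖u‖ = 1 := by rw [hu]; exact unit_norm h12
    have hvn : ‖v‖ = 1 := by rw [hv]; exact unit_norm hff
    have hdu : (dist e1 e2) • u = e2 - e1 := by rw [hu]; exact smul_dist h12
    have hdv : (dist f1 f2) • v = f2 - f1 := by rw [hv]; exact smul_dist hff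
    obtain ⟨g, hg⟩ : ∃ g : ℝ, g = ⟪u, v⟫ := ⟨_, rfl⟩
    have hρ0 : (0:ℝ) < η * a / 2 := by positivity
    have hτb : 2*c*a ≤ (η * a / 2) * min 1 c1 / 16 := by nlinarith [hcle2]
    have hlow : ∀ (Y X : E2) (δ' : E2), ‖δ'‖ ≤ 2*c*a → η * a < dist X Y →
        η * a / 2 ≤ ‖(Y - X) + δ'‖ := by
      intro Y X δ' hδ' hdist
      have h1 : ‖Y - X‖ ≤ ‖(Y - X) + δ'‖ + ‖δ'‖ := by
        calc ‖Y - X‖ = ‖((Y - X) + δ') - δ'‖ := by rw [add_sub_cancel_right]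
        _ ≤ ‖(Y - X) + δ'‖ + ‖δ'‖ := norm_sub_le _ _
      have h2 : dist X Y = ‖Y - X‖ := dist_eq_norm' X Y
      have h3 : 2*c*a ≤ η*a/2 := by nlinarith [hcle1, ha.le, hη0.le]
      linarith
    have hs0 : 0 < m := by linarith
    have ht0 : 0 < dist e1 e2 - m := by linarith
    have hs'0 : 0 < m' := by linarith
    have ht'0 : 0 < dist f1 f2 - m' := by linarith
    rcases cross_scalar (g := g) hs0 ht0 hs'0 ht'0 with hQ | hQ | hQ | hQ
    · -- vertex e1
      refine perturb (w1 := m • u + (-m') • v) (w2 := m • u + (dist f1 f2 - m') • v)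
        (δ := -δ) hc1 hρ0 ?_ ?_ ?_ hδn' hτb ?_ ?_ hE1
      · have hid : (f1 - e1) + δ = m • u + (-m') • v := by
          rw [hδ, hp, hq, neg_smul]; abel
        rw [← hid]; exact hlow f1 e1 δ hδn hc11
      · have hid : (f2 - e1) + δ = m • u + (dist f1 f2 - m') • v := by
          rw [hδ, hp, hq, sub_smul, hdv]; abel
        rw [← hid]; exact hlow f2 e1 δ hδn hc12
      · rw [inner_comb _ _ _ _ u v hun hvn, ← hg]; linarith [hQ]
      · have hid : (f1 - e1) + δ = m • u + (-m') • v := by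
          rw [hδ, hp, hq, neg_smul]; abel
        rw [← hid]; abel
      · have hid : (f2 - e1) + δ = m • u + (dist f1 f2 - m') • v := by
          rw [hδ, hp, hq, sub_smul, hdv]; abel
        rw [← hid]; abel
    · -- vertex e2
      refine perturb (w1 := (-(dist e1 e2 - m)) • u + (-m') • v)
        (w2 := (-(dist e1 e2 - m)) • u + (dist f1 f2 - m') • v)
        (δ := -δ) hc1 hρ0 ?_ ?_ ?_ hδn' hτb ?_ ?_ hE2
      · have hid : (f1 - e2) + δ = (-(dist e1 e2 - m)) • u + (-m') • v := by
          rw [hδ, hp, hq, neg_smul, neg_smul, sub_smul, hdu]; abel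
        rw [← hid]; exact hlow f1 e2 δ hδn hc21
      · have hid : (f2 - e2) + δ = (-(dist e1 e2 - m)) • u + (dist f1 f2 - m') • v := by
          rw [hδ, hp, hq, neg_smul, sub_smul, sub_smul, hdu, hdv]; abel
        rw [← hid]; exact hlow f2 e2 δ hδn hc22
      · rw [inner_comb _ _ _ _ u v hun hvn, ← hg]; linarith [hQ]
      · have hid : (f1 - e2) + δ = (-(dist e1 e2 - m)) • u + (-m') • v := by
          rw [hδ, hp, hq, neg_smul, neg_smul, sub_smul, hdu]; abel
        rw [← hid]; abel
      · have hid : (f2 - e2) + δ = (-(dist e1 e2 - m)) • u + (dist f1 f2 - m') • v := by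
          rw [hδ, hp, hq, neg_smul, sub_smul, sub_smul, hdu, hdv]; abel
        rw [← hid]; abel
    · -- vertex f1-hat
      refine perturb (w1 := (-m) • u + m' • v) (w2 := (dist e1 e2 - m) • u + m' • v)
        (δ := δ) hc1 hρ0 ?_ ?_ ?_ hδn hτb ?_ ?_ hF1
      · have hid : (e1 - f1) + (-δ) = (-m) • u + m' • v := by
          rw [hδ, hp, hq, neg_smul]; abel
        rw [← hid]; exact hlow e1 f1 (-δ) hδn' (by rw [dist_comm]; exact hc11)
      · have hid : (e2 - f1) + (-δ) = (dist e1 e2 - m) • u + m' • v := by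
          rw [hδ, hp, hq, sub_smul, hdu]; abel
        rw [← hid]; exact hlow e2 f1 (-δ) hδn' (by rw [dist_comm]; exact hc21)
      · rw [inner_comb _ _ _ _ u v hun hvn, ← hg]; linarith [hQ]
      · have hid : (e1 - f1) + (-δ) = (-m) • u + m' • v := by
          rw [hδ, hp, hq, neg_smul]; abel
        rw [← hid]; abel
      · have hid : (e2 - f1) + (-δ) = (dist e1 e2 - m) • u + m' • v := by
          rw [hδ, hp, hq, sub_smul, hdu]; abel
        rw [← hid]; abel
    · -- vertex f2-hat
      refine perturb (w1 := (-m) • u + (-(dist f1 f2 - m')) • v)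
        (w2 := (dist e1 e2 - m) • u + (-(dist f1 f2 - m')) • v)
        (δ := δ) hc1 hρ0 ?_ ?_ ?_ hδn hτb ?_ ?_ hF2
      · have hid : (e1 - f2) + (-δ) = (-m) • u + (-(dist f1 f2 - m')) • v := by
          rw [hδ, hp, hq, neg_smul, neg_smul, sub_smul, hdv]; abel
        rw [← hid]; exact hlow e1 f2 (-δ) hδn' (by rw [dist_comm]; exact hc12)
      · have hid : (e2 - f2) + (-δ) = (dist e1 e2 - m) • u + (-(dist f1 f2 - m')) • v := by
          rw [hδ, hp, hq, neg_smul, sub_smul, sub_smul, hdu, hdv]; abel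
        rw [← hid]; exact hlow e2 f2 (-δ) hδn' (by rw [dist_comm]; exact hc22)
      · rw [inner_comb _ _ _ _ u v hun hvn, ← hg]; linarith [hQ]
      · have hid : (e1 - f2) + (-δ) = (-m) • u + (-(dist f1 f2 - m')) • v := by
          rw [hδ, hp, hq, neg_smul, neg_smul, sub_smul, hdv]; abel
        rw [← hid]; abel
      · have hid : (e2 - f2) + (-δ) = (dist e1 e2 - m) • u + (-(dist f1 f2 - m')) • v := by
          rw [hδ, hp, hq, neg_smul, sub_smul, sub_smul, hdu, hdv]; abel
        rw [← hid]; abel
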